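/- (Law-of-large-numbers step in the proof of the consistency theorem.) Let (Z_1, X_1), (Z_2, X_2), … be i.i.d. pairs where Z_n ∈ {1, 2} with P(Z_n = i) = α_i* (α₁*, α₂* > 0, α₁* + α₂* = 1), and conditionally on Z_n = i, X_n is Gaussian with mean μ_i* and variance (σ_i*)² > 0. For each N, let V_N be the infimum, over all soft membership assignments m for the data (X_1, …, X_N) whose induced parameters satisfy α_i(m) > 0 and σ_i²(m) > 0 for i = 1,2, of the quantity (α₁/2) ln(σ₁²) + (α₂/2) ln(σ₂²) + H(α₁, α₂) (parameters induced by m), which equals (1/2) ln G(m). Then for every ε > 0, lim_{N→∞} P( V_N ≤ (α₁*/2) ln((σ₁*)²) + (α₂*/2) ln((σ₂*)²) + H(α₁*, α₂*) + ε ) = 1. -/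

import Mathlib

open Real Finset MeasureTheory ProbabilityTheory Filter
open scoped NNReal

noncomputable section

/-- Binary entropy-type function `H(a, b) = -a ln a - b ln b` (nats). -/
def H2 (a b : ℝ) : ℝ := -a * Real.log a - b * Real.log b

/-- A soft membership assignment: each `m n ∈ [0,1]`. -/
def isMemb {N : ℕ} (m : Fin N → ℝ) : Prop := ∀ n, 0 ≤ m n ∧ m n ≤ 1

/-- Induced mixing weight `α` for the class with weights `w`. -/
def alph {N : ℕ} (w : Fin N → ℝ) : ℝ := (∑ n, w n) / N

/-- Induced mean `μ` for the class with weights `w`. -/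
def muI {N : ℕ} (x w : Fin N → ℝ) : ℝ := (∑ n, w n * x n) / (alph w * N)

/-- Induced variance `σ²` for the class with weights `w`. -/
def sig2 {N : ℕ} (x w : Fin N → ℝ) : ℝ :=
  (∑ n, w n * (x n - muI x w) ^ 2) / (alph w * N)

/-- The quantity `(α₁/2) ln σ₁² + (α₂/2) ln σ₂² + H(α₁, α₂)`, i.e. `(1/2) ln G(m)`,
for the parameters induced by the assignment `m` on data `x`. -/
def halfLogG {N : ℕ} (x m : Fin N → ℝ) : ℝ :=
  alph m / 2 * Real.log (sig2 x m)
    + (alph fun n => 1 - m n) / 2 * Real.log (sig2 x fun n => 1 - m n)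
    + H2 (alph m) (alph fun n => 1 - m n)

/-- The infimum `V_N` of `(1/2) ln G(m)` over all soft assignments `m` for the data `x`
whose induced parameters satisfy `αᵢ > 0` and `σᵢ² > 0`, computed in `EReal`. -/
def Vinf {N : ℕ} (x : Fin N → ℝ) : EReal :=
  sInf {v : EReal | ∃ m : Fin N → ℝ, isMemb m ∧
    0 < alph m ∧ (0 < alph fun n => 1 - m n) ∧
    0 < sig2 x m ∧ (0 < sig2 x fun n => 1 - m n) ∧
    v = ((halfLogG x m : ℝ) : EReal)}

/-- The joint law of a labelled sample `(Z, X)`: `Z = i` with probability `αᵢ` and,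
conditionally on `Z = i`, `X` is Gaussian with mean `μᵢ` and variance `vᵢ`. -/
def pairLaw (a₁ a₂ μ₁ μ₂ : ℝ) (v₁ v₂ : ℝ≥0) : Measure (Fin 2 × ℝ) :=
  ENNReal.ofReal a₁ • (Measure.dirac (0 : Fin 2)).prod (gaussianReal μ₁ v₁)
    + ENNReal.ofReal a₂ • (Measure.dirac (1 : Fin 2)).prod (gaussianReal μ₂ v₂)

/-! ### Auxiliary lemmas: one-dimensional Gaussian integrals -/

namespace LLNAux

open Set

lemma my_int_odd (b : ℝ) : ∫ x : ℝ, x * rexp (-b * x^2) = 0 := by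
  have h := integral_neg_eq_self (fun x : ℝ => x * rexp (-b * x^2)) (volume : Measure ℝ)
  simp only [neg_mul, neg_sq] at h
  have h2 : ∫ x : ℝ, -(x * rexp (-(b * x ^ 2))) = ∫ x : ℝ, x * rexp (-(b * x ^ 2)) := by
    simpa [mul_comm] using h
  rw [integral_neg] at h2
  simp only [neg_mul]
  linarith

lemma sq_mul_exp_le (b : ℝ) (hb : 0 < b) (x : ℝ) :
    x^2 * rexp (-b * x^2) ≤ 2 / b * rexp (-(b/2) * x^2) := by
  have hb2 : 0 < b / 2 := half_pos hb
  have hx : b / 2 * x ^ 2 ≤ rexp (b / 2 * x ^ 2) := by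
    have h := Real.add_one_le_exp ((b/2) * x^2); linarith
  have h1 : x ^ 2 ≤ 2 / b * rexp (b / 2 * x ^ 2) := by
    rw [div_mul_eq_mul_div, le_div_iff₀ hb]; nlinarith
  have hsplit : rexp (-b * x^2) = rexp (-(b/2) * x^2) * rexp (-(b/2)*x^2) := by
    rw [← Real.exp_add]; ring_nf
  have hinv : rexp (-(b/2) * x^2) * rexp (b/2 * x^2) = 1 := by
    rw [← Real.exp_add]; ring_nf; exact Real.exp_zero
  have hp1 := Real.exp_pos (-(b/2) * x^2)
  calc x^2 * rexp (-b*x^2) = (x^2 * rexp (-(b/2)*x^2)) * rexp (-(b/2)*x^2) := by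
        rw [hsplit]; ring
    _ ≤ (2/b) * rexp (-(b/2)*x^2) := by
        refine mul_le_mul_of_nonneg_right ?_ hp1.le
        calc x^2 * rexp (-(b/2)*x^2) ≤ (2 / b * rexp (b / 2 * x ^ 2)) * rexp (-(b/2)*x^2) :=
              mul_le_mul_of_nonneg_right h1 hp1.le
          _ = 2 / b := by rw [mul_assoc, mul_comm (rexp (b/2*x^2)), hinv, mul_one]

lemma my_integrable_sq (b : ℝ) (hb : 0 < b) :
    Integrable (fun x : ℝ => x^2 * rexp (-b * x^2)) := by
  have hint := (integrable_exp_neg_mul_sq (half_pos hb)).const_mul (2 / b)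
  refine hint.mono' ?_ (Filter.Eventually.of_forall fun x => ?_)
  · exact ((measurable_id.pow_const 2).mul
      ((measurable_id.pow_const 2).const_mul (-b)).exp).aestronglyMeasurable
  · rw [Real.norm_eq_abs, abs_of_nonneg (by positivity)]
    exact sq_mul_exp_le b hb x

lemma my_int_sq (b : ℝ) (hb : 0 < b) :
    ∫ x : ℝ, x^2 * rexp (-b * x^2) = Real.sqrt (π / b) / (2 * b) := by
  have hint := my_integrable_sq b hb
  have hIic : (∫ x in Iic (0:ℝ), x^2 * rexp (-b * x^2))
      = ∫ x in Ioi (0:ℝ), x^2 * rexp (-b * x^2) := by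
    rw [show Set.Iic (0:ℝ) = Set.Iic (-0) by norm_num, ← integral_comp_neg_Ioi]
    norm_num
  have hsplit : (∫ x : ℝ, x^2 * rexp (-b * x^2))
      = (∫ x in Iic (0:ℝ), x^2 * rexp (-b * x^2))
        + ∫ x in Ioi (0:ℝ), x^2 * rexp (-b * x^2) := by
    rw [← setIntegral_union (Iic_disjoint_Ioi le_rfl) measurableSet_Ioi
      hint.integrableOn hint.integrableOn, Iic_union_Ioi, setIntegral_univ]
  have hIoi : (∫ x in Ioi (0:ℝ), x^2 * rexp (-b * x^2))
      = b ^ (-(2+1:ℝ)/2) * (1/2) * Real.Gamma ((2+1)/2) := by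
    rw [← integral_rpow_mul_exp_neg_mul_rpow (by norm_num) (by norm_num : (-1:ℝ) < 2) hb]
    refine setIntegral_congr_fun measurableSet_Ioi fun x hx => ?_
    norm_num [Real.rpow_natCast]
  have hGamma : Real.Gamma ((2+1:ℝ)/2) = Real.sqrt π / 2 := by
    rw [show ((2+1:ℝ)/2) = 1/2 + 1 by norm_num, Real.Gamma_add_one (by norm_num),
      Real.Gamma_one_half_eq]
    ring
  have hsb : (0:ℝ) < Real.sqrt b := Real.sqrt_pos.2 hb
  have h2 : b ^ (-(2+1:ℝ)/2) = (Real.sqrt b * b)⁻¹ := by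
    rw [show (-(2+1:ℝ)/2) = -(1/2 + 1) by norm_num, Real.rpow_neg hb.le, Real.rpow_add hb,
      Real.rpow_one, ← Real.sqrt_eq_rpow]
  rw [hsplit, hIic, hIoi, hGamma, h2, Real.sqrt_div pi_nonneg]
  field_simp
  ring

/-! ### Gaussian moments -/

lemma gauss_pdf_nn (μ : ℝ) (v : ℝ≥0) :
    gaussianPDF μ v = fun x => (((gaussianPDFReal μ v x).toNNReal : ℝ≥0) : ENNReal) := rfl

lemma gauss_integral_eq (μ : ℝ) {v : ℝ≥0} (hv : v ≠ 0) (g : ℝ → ℝ) :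
    ∫ x, g x ∂(gaussianReal μ v) = ∫ x, gaussianPDFReal μ v x * g x := by
  rw [gaussianReal_of_var_ne_zero _ hv, gauss_pdf_nn,
    integral_withDensity_eq_integral_smul
      ((measurable_gaussianPDFReal μ v).real_toNNReal) g]
  refine integral_congr_ae (Filter.Eventually.of_forall fun x => ?_)
  simp [NNReal.smul_def, Real.coe_toNNReal _ (gaussianPDFReal_nonneg μ v x)]

lemma gauss_integrable_iff (μ : ℝ) {v : ℝ≥0} (hv : v ≠ 0) (g : ℝ → ℝ) :
    Integrable g (gaussianReal μ v) ↔
      Integrable (fun x => gaussianPDFReal μ v x * g x) volume := by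
  rw [gaussianReal_of_var_ne_zero _ hv, gauss_pdf_nn,
    integrable_withDensity_iff_integrable_smul
      ((measurable_gaussianPDFReal μ v).real_toNNReal)]
  refine integrable_congr (Filter.Eventually.of_forall fun x => ?_)
  simp [NNReal.smul_def, Real.coe_toNNReal _ (gaussianPDFReal_nonneg μ v x)]

lemma integrable_shift {h : ℝ → ℝ} (hi : Integrable h (volume : Measure ℝ)) (a : ℝ) :
    Integrable (fun y => h (y + a)) (volume : Measure ℝ) := by
  have hmap : Measure.map (· + a) (volume : Measure ℝ) = volume :=
    map_add_right_eq_self volume a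
  have : Integrable h (Measure.map (· + a) (volume : Measure ℝ)) := by rw [hmap]; exact hi
  exact this.comp_measurable (measurable_id.add_const a)

lemma pdf_shift {μ : ℝ} {v : ℝ≥0} (y : ℝ) :
    gaussianPDFReal μ v (y + μ) = (Real.sqrt (2*π*v))⁻¹ * rexp (-(2*(v:ℝ))⁻¹ * y^2) := by
  rw [gaussianPDFReal]
  congr 1
  rw [add_sub_cancel_right, neg_div, div_eq_inv_mul, neg_mul]

section moments
variable {μ : ℝ} {v : ℝ≥0} (hv : v ≠ 0)
include hv

lemma vpos : (0:ℝ) < v := by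
  have := pos_iff_ne_zero.2 hv
  exact_mod_cast this

lemma bpos : (0:ℝ) < (2*(v:ℝ))⁻¹ := by
  have := vpos hv; positivity

lemma csqrt_pos : (0:ℝ) < Real.sqrt (2*π*v) := by
  have := vpos hv
  have := pi_pos
  positivity

lemma c_mul_sqrt : (Real.sqrt (2*π*(v:ℝ)))⁻¹ * Real.sqrt (π / (2*(v:ℝ))⁻¹) = 1 := by
  have h1 : π / ((2*(v:ℝ))⁻¹) = 2*π*(v:ℝ) := by
    have := vpos hv; field_simp
  rw [h1, inv_mul_cancel₀ (csqrt_pos hv).ne']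

lemma integrable_pdf_mul_shift (g : ℝ → ℝ)
    (h : Integrable (fun y => rexp (-(2*(v:ℝ))⁻¹ * y^2) * g (y + μ)) volume) :
    Integrable (fun x => gaussianPDFReal μ v x * g x) volume := by
  have h2 : Integrable (fun y => (Real.sqrt (2*π*(v:ℝ)))⁻¹ *
      (rexp (-(2*(v:ℝ))⁻¹ * y^2) * g (y + μ))) volume := h.const_mul _
  have h3 : Integrable (fun y => gaussianPDFReal μ v (y + μ) * g (y + μ)) volume := by
    refine h2.congr (Filter.Eventually.of_forall fun y => ?_)
    simp only [pdf_shift, mul_assoc]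
  have h4 := integrable_shift h3 (-μ)
  refine h4.congr (Filter.Eventually.of_forall fun y => ?_)
  simp

lemma integral_pdf_mul_shift (g : ℝ → ℝ) :
    ∫ x, gaussianPDFReal μ v x * g x =
      (Real.sqrt (2*π*(v:ℝ)))⁻¹ * ∫ y, rexp (-(2*(v:ℝ))⁻¹ * y^2) * g (y + μ) := by
  rw [← integral_const_mul]
  rw [← integral_add_right_eq_self (fun x => gaussianPDFReal μ v x * g x) μ]
  refine integral_congr_ae (Filter.Eventually.of_forall fun y => ?_)
  simp only [pdf_shift, mul_assoc]

lemma gauss_integrable_id : Integrable (fun x => x) (gaussianReal μ v) := by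
  rw [gauss_integrable_iff μ hv]
  refine integrable_pdf_mul_shift hv _ ?_
  have h1 : Integrable (fun y : ℝ => y * rexp (-(2*(v:ℝ))⁻¹ * y^2)
      + μ * rexp (-(2*(v:ℝ))⁻¹ * y^2)) volume :=
    (integrable_mul_exp_neg_mul_sq (bpos hv)).add
      ((integrable_exp_neg_mul_sq (bpos hv)).const_mul μ)
  refine h1.congr (Filter.Eventually.of_forall fun y => ?_)
  ring

lemma gauss_integrable_sq : Integrable (fun x => x^2) (gaussianReal μ v) := by
  rw [gauss_integrable_iff μ hv]
  refine integrable_pdf_mul_shift hv _ ?_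
  have h1 : Integrable (fun y : ℝ => (y^2 * rexp (-(2*(v:ℝ))⁻¹ * y^2)
      + (2*μ) * (y * rexp (-(2*(v:ℝ))⁻¹ * y^2))) + μ^2 * rexp (-(2*(v:ℝ))⁻¹ * y^2)) volume :=
    ((my_integrable_sq _ (bpos hv)).add
      ((integrable_mul_exp_neg_mul_sq (bpos hv)).const_mul (2*μ))).add
      ((integrable_exp_neg_mul_sq (bpos hv)).const_mul (μ^2))
  refine h1.congr (Filter.Eventually.of_forall fun y => ?_)
  ring

lemma gauss_integral_id : ∫ x, x ∂(gaussianReal μ v) = μ := by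
  rw [gauss_integral_eq μ hv, integral_pdf_mul_shift hv]
  set b : ℝ := (2*(v:ℝ))⁻¹ with hb
  have h1 : (∫ y : ℝ, rexp (-b*y^2) * (y+μ)) = μ * Real.sqrt (π / b) := by
    rw [show (fun y : ℝ => rexp (-b*y^2)*(y+μ))
        = fun y => y * rexp (-b*y^2) + μ * rexp (-b*y^2) from funext fun y => by ring]
    rw [integral_add (integrable_mul_exp_neg_mul_sq (bpos hv))
      ((integrable_exp_neg_mul_sq (bpos hv)).const_mul μ), my_int_odd,
      integral_const_mul, integral_gaussian, zero_add]
  rw [h1, mul_left_comm, c_mul_sqrt hv, mul_one]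

lemma gauss_integral_sq : ∫ x, x^2 ∂(gaussianReal μ v) = (v:ℝ) + μ^2 := by
  rw [gauss_integral_eq μ hv, integral_pdf_mul_shift hv]
  set b : ℝ := (2*(v:ℝ))⁻¹ with hb
  have h1 : (∫ y : ℝ, rexp (-b*y^2) * (y+μ)^2)
      = Real.sqrt (π / b) / (2*b) + μ^2 * Real.sqrt (π / b) := by
    rw [show (fun y : ℝ => rexp (-b*y^2)*(y+μ)^2)
        = fun y => (y^2 * rexp (-b*y^2) + (2*μ) * (y * rexp (-b*y^2)))
            + μ^2 * rexp (-b*y^2) from funext fun y => by ring]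
    have i1 : Integrable (fun y : ℝ => y^2 * rexp (-b*y^2)
        + (2*μ) * (y * rexp (-b*y^2))) volume :=
      (my_integrable_sq _ (bpos hv)).add
        ((integrable_mul_exp_neg_mul_sq (bpos hv)).const_mul (2*μ))
    rw [integral_add i1 ((integrable_exp_neg_mul_sq (bpos hv)).const_mul (μ^2)),
      integral_add (my_integrable_sq _ (bpos hv))
        ((integrable_mul_exp_neg_mul_sq (bpos hv)).const_mul (2*μ)),
      my_int_sq _ (bpos hv), integral_const_mul,
      integral_const_mul, my_int_odd, integral_gaussian]
    ring
  rw [h1, mul_add, mul_left_comm, c_mul_sqrt hv, mul_one]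
  have hveq : (Real.sqrt (2*π*(v:ℝ)))⁻¹ * (Real.sqrt (π / b) / (2*b)) = (v:ℝ) := by
    rw [div_eq_mul_inv, ← mul_assoc, c_mul_sqrt hv, one_mul, hb]
    have hv' := vpos hv
    field_simp
  rw [hveq]

lemma gauss_integrable_pow (k : ℕ) (hk : k ≤ 2) :
    Integrable (fun x : ℝ => x ^ k) (gaussianReal μ v) := by
  interval_cases k
  · simpa using (integrable_const (1:ℝ) : Integrable _ (gaussianReal μ v))
  · simpa [pow_one] using gauss_integrable_id hv
  · exact gauss_integrable_sq hv

end moments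

/-! ### pairLaw decomposition -/

section pairlaw
variable {a₁ a₂ μ₁ μ₂ : ℝ} {v₁ v₂ : ℝ≥0}

lemma pairLaw_eq : pairLaw a₁ a₂ μ₁ μ₂ v₁ v₂ =
    ENNReal.ofReal a₁ • (gaussianReal μ₁ v₁).map (Prod.mk (0 : Fin 2))
      + ENNReal.ofReal a₂ • (gaussianReal μ₂ v₂).map (Prod.mk (1 : Fin 2)) := by
  rw [pairLaw, Measure.dirac_prod, Measure.dirac_prod]

lemma integrable_pairLaw {f : Fin 2 × ℝ → ℝ} (hf : Measurable f)
    (h₀ : Integrable (fun x => f (0, x)) (gaussianReal μ₁ v₁))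
    (h₁ : Integrable (fun x => f (1, x)) (gaussianReal μ₂ v₂)) :
    Integrable f (pairLaw a₁ a₂ μ₁ μ₂ v₁ v₂) := by
  rw [pairLaw_eq]
  refine Integrable.add_measure ?_ ?_ <;>
    refine Integrable.smul_measure ?_ ENNReal.ofReal_ne_top
  · exact (integrable_map_measure hf.aestronglyMeasurable
      measurable_prodMk_left.aemeasurable).2 h₀
  · exact (integrable_map_measure hf.aestronglyMeasurable
      measurable_prodMk_left.aemeasurable).2 h₁

lemma integral_pairLaw (ha₁ : 0 ≤ a₁) (ha₂ : 0 ≤ a₂) {f : Fin 2 × ℝ → ℝ} (hf : Measurable f)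
    (h₀ : Integrable (fun x => f (0, x)) (gaussianReal μ₁ v₁))
    (h₁ : Integrable (fun x => f (1, x)) (gaussianReal μ₂ v₂)) :
    ∫ p, f p ∂(pairLaw a₁ a₂ μ₁ μ₂ v₁ v₂) =
      a₁ * ∫ x, f (0, x) ∂(gaussianReal μ₁ v₁) + a₂ * ∫ x, f (1, x) ∂(gaussianReal μ₂ v₂) := by
  rw [pairLaw_eq]
  rw [integral_add_measure
    (((integrable_map_measure hf.aestronglyMeasurable
      measurable_prodMk_left.aemeasurable).2 h₀).smul_measure ENNReal.ofReal_ne_top)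
    (((integrable_map_measure hf.aestronglyMeasurable
      measurable_prodMk_left.aemeasurable).2 h₁).smul_measure ENNReal.ofReal_ne_top),
    integral_smul_measure, integral_smul_measure,
    integral_map measurable_prodMk_left.aemeasurable hf.aestronglyMeasurable,
    integral_map measurable_prodMk_left.aemeasurable hf.aestronglyMeasurable,
    ENNReal.toReal_ofReal ha₁, ENNReal.toReal_ofReal ha₂, smul_eq_mul, smul_eq_mul]

end pairlaw

/-! ### The indicator-power functions -/

def Fk (j : Fin 2) (k : ℕ) : Fin 2 × ℝ → ℝ := fun p => if p.1 = j then p.2 ^ k else 0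

lemma measurable_Fk (j : Fin 2) (k : ℕ) : Measurable (Fk j k) :=
  Measurable.ite (measurable_fst (measurableSet_singleton j))
    (measurable_snd.pow_const k) measurable_const

@[simp] lemma Fk00 (k : ℕ) (x : ℝ) : Fk 0 k (0, x) = x ^ k := by simp [Fk]
@[simp] lemma Fk01 (k : ℕ) (x : ℝ) : Fk 0 k (1, x) = 0 := by
  simp only [Fk]; norm_num
@[simp] lemma Fk10 (k : ℕ) (x : ℝ) : Fk 1 k (0, x) = 0 := by
  simp only [Fk]; norm_num
@[simp] lemma Fk11 (k : ℕ) (x : ℝ) : Fk 1 k (1, x) = x ^ k := by simp [Fk]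

lemma Fk_mul (j : Fin 2) (k : ℕ) (p : Fin 2 × ℝ) : Fk j 0 p * p.2 ^ k = Fk j k p := by
  by_cases h : p.1 = j <;> simp [Fk, h]

lemma one_sub_Fk (z : Fin 2) (x : ℝ) : 1 - Fk 0 0 (z, x) = Fk 1 0 (z, x) := by
  fin_cases z <;> simp

lemma Fk_mem01 (j : Fin 2) (p : Fin 2 × ℝ) : 0 ≤ Fk j 0 p ∧ Fk j 0 p ≤ 1 := by
  by_cases h : p.1 = j <;> simp [Fk, h]

section FkInt
variable {a₁ a₂ μ₁ μ₂ : ℝ} {v₁ v₂ : ℝ≥0}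

lemma integrable_Fk (hv₁ : v₁ ≠ 0) (hv₂ : v₂ ≠ 0) (j : Fin 2) (k : ℕ) (hk : k ≤ 2) :
    Integrable (Fk j k) (pairLaw a₁ a₂ μ₁ μ₂ v₁ v₂) := by
  refine integrable_pairLaw (measurable_Fk j k) ?_ ?_ <;> fin_cases j
  · simpa using gauss_integrable_pow hv₁ k hk
  · simpa using (integrable_const (0:ℝ) : Integrable _ (gaussianReal μ₁ v₁))
  · simpa using (integrable_const (0:ℝ) : Integrable _ (gaussianReal μ₂ v₂))
  · simpa using gauss_integrable_pow hv₂ k hk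

lemma integral_Fk0 (ha₁ : 0 ≤ a₁) (ha₂ : 0 ≤ a₂) (hv₁ : v₁ ≠ 0) (hv₂ : v₂ ≠ 0)
    (k : ℕ) (hk : k ≤ 2) :
    ∫ p, Fk 0 k p ∂(pairLaw a₁ a₂ μ₁ μ₂ v₁ v₂)
      = a₁ * ∫ x, x ^ k ∂(gaussianReal μ₁ v₁) := by
  rw [integral_pairLaw ha₁ ha₂ (measurable_Fk 0 k)
    (by simpa using gauss_integrable_pow hv₁ k hk)
    (by simpa using (integrable_const (0:ℝ) : Integrable _ (gaussianReal μ₂ v₂)))]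
  simp

lemma integral_Fk1 (ha₁ : 0 ≤ a₁) (ha₂ : 0 ≤ a₂) (hv₁ : v₁ ≠ 0) (hv₂ : v₂ ≠ 0)
    (k : ℕ) (hk : k ≤ 2) :
    ∫ p, Fk 1 k p ∂(pairLaw a₁ a₂ μ₁ μ₂ v₁ v₂)
      = a₂ * ∫ x, x ^ k ∂(gaussianReal μ₂ v₂) := by
  rw [integral_pairLaw ha₁ ha₂ (measurable_Fk 1 k)
    (by simpa using (integrable_const (0:ℝ) : Integrable _ (gaussianReal μ₁ v₁)))
    (by simpa using gauss_integrable_pow hv₂ k hk)]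
  simp

end FkInt

/-! ### SLLN for functions of the iid pairs -/

theorem slln_key {Ω : Type*} [MeasurableSpace Ω] (P : Measure Ω) [IsProbabilityMeasure P]
    (ν : Measure (Fin 2 × ℝ)) (Z : ℕ → Ω → Fin 2) (X : ℕ → Ω → ℝ)
    (hZ : ∀ n, Measurable (Z n)) (hX : ∀ n, Measurable (X n))
    (hindep : iIndepFun (fun n ω => (Z n ω, X n ω)) P)
    (hlaw : ∀ n, Measure.map (fun ω => (Z n ω, X n ω)) P = ν)
    (f : Fin 2 × ℝ → ℝ) (hf : Measurable f) (hfi : Integrable f ν) :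
    ∀ᵐ ω ∂P, Filter.Tendsto (fun N : ℕ => (∑ n ∈ Finset.range N, f (Z n ω, X n ω)) / N)
      Filter.atTop (nhds (∫ p, f p ∂ν)) := by
  set Y : ℕ → Ω → ℝ := fun n ω => f (Z n ω, X n ω) with hY
  have hpm : ∀ n, Measurable fun ω => (Z n ω, X n ω) := fun n => (hZ n).prodMk (hX n)
  have hYm : ∀ n, Measurable (Y n) := fun n => hf.comp (hpm n)
  have hint : Integrable (Y 0) P := by
    have h0 : Integrable f (Measure.map (fun ω => (Z 0 ω, X 0 ω)) P) := by
      rw [hlaw 0]; exact hfi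
    exact (integrable_map_measure hf.aestronglyMeasurable (hpm 0).aemeasurable).1 h0
  have hindep' : Pairwise (Function.onFun (IndepFun · · P) Y) := fun i j hij =>
    (hindep.indepFun hij).comp hf hf
  have hident : ∀ i, IdentDistrib (Y i) (Y 0) P P := fun i =>
    ⟨(hYm i).aemeasurable, (hYm 0).aemeasurable, by
      show Measure.map (f ∘ fun ω => (Z i ω, X i ω)) P
        = Measure.map (f ∘ fun ω => (Z 0 ω, X 0 ω)) P
      rw [← Measure.map_map hf (hpm i), ← Measure.map_map hf (hpm 0), hlaw i, hlaw 0]⟩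
  have h := strong_law_ae_real Y hint hindep' hident
  have hE : P[Y 0] = ∫ p, f p ∂ν := by
    rw [hY, ← hlaw 0, integral_map (hpm 0).aemeasurable hf.aestronglyMeasurable]
  rw [hE] at h
  exact h

/-! ### Algebraic form of `sig2` -/

lemma sig2_formula {N : ℕ} (x w : Fin N → ℝ) (hN : (N:ℝ) ≠ 0) (hw : (∑ i, w i) ≠ 0) :
    sig2 x w = (∑ i, w i * x i ^ 2)/(∑ i, w i) - ((∑ i, w i * x i)/(∑ i, w i))^2 := by
  have halphN : alph w * N = ∑ i, w i := by rw [alph]; field_simp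
  have hmu : muI x w = (∑ i, w i * x i)/(∑ i, w i) := by rw [muI, halphN]
  rw [sig2, halphN, hmu]
  have hexp : ∀ i : Fin N, w i * (x i - (∑ j, w j * x j)/(∑ j, w j))^2
      = w i * x i ^ 2 - 2*((∑ j, w j * x j)/(∑ j, w j))*(w i * x i)
        + ((∑ j, w j * x j)/(∑ j, w j))^2 * w i := fun i => by ring
  rw [Finset.sum_congr rfl fun i _ => hexp i, Finset.sum_add_distrib,
    Finset.sum_sub_distrib, ← Finset.mul_sum, ← Finset.mul_sum]
  field_simp
  ring

open Filter in
set_option maxHeartbeats 1000000 in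
lemma det_step (a₁ a₂ μ₁ μ₂ : ℝ) (v₁ v₂ : ℝ≥0) (ha₁ : 0 < a₁) (ha₂ : 0 < a₂)
    (hv₁ : 0 < v₁) (hv₂ : 0 < v₂) (ε : ℝ) (hε : 0 < ε) (z : ℕ → Fin 2) (x : ℕ → ℝ)
    (h00 : Tendsto (fun N : ℕ => (∑ n ∈ Finset.range N, Fk 0 0 (z n, x n)) / N) atTop (nhds a₁))
    (h01 : Tendsto (fun N : ℕ => (∑ n ∈ Finset.range N, Fk 0 1 (z n, x n)) / N) atTop
      (nhds (a₁ * μ₁)))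
    (h02 : Tendsto (fun N : ℕ => (∑ n ∈ Finset.range N, Fk 0 2 (z n, x n)) / N) atTop
      (nhds (a₁ * ((v₁:ℝ) + μ₁^2))))
    (h10 : Tendsto (fun N : ℕ => (∑ n ∈ Finset.range N, Fk 1 0 (z n, x n)) / N) atTop (nhds a₂))
    (h11 : Tendsto (fun N : ℕ => (∑ n ∈ Finset.range N, Fk 1 1 (z n, x n)) / N) atTop
      (nhds (a₂ * μ₂)))
    (h12 : Tendsto (fun N : ℕ => (∑ n ∈ Finset.range N, Fk 1 2 (z n, x n)) / N) atTop
      (nhds (a₂ * ((v₂:ℝ) + μ₂^2)))) :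
    ∀ᶠ N : ℕ in atTop, Vinf (fun i : Fin N => x i) ≤
      ((a₁ / 2 * Real.log (v₁:ℝ) + a₂ / 2 * Real.log (v₂:ℝ) + H2 a₁ a₂ + ε : ℝ) : EReal) := by
  have hv₁' : (0:ℝ) < v₁ := by exact_mod_cast hv₁
  have hv₂' : (0:ℝ) < v₂ := by exact_mod_cast hv₂
  set s0 : ℕ → ℝ := fun N => (∑ n ∈ Finset.range N, Fk 0 0 (z n, x n)) / N with hs0
  set s1 : ℕ → ℝ := fun N => (∑ n ∈ Finset.range N, Fk 0 1 (z n, x n)) / N with hs1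
  set s2 : ℕ → ℝ := fun N => (∑ n ∈ Finset.range N, Fk 0 2 (z n, x n)) / N with hs2
  set t0 : ℕ → ℝ := fun N => (∑ n ∈ Finset.range N, Fk 1 0 (z n, x n)) / N with ht0
  set t1 : ℕ → ℝ := fun N => (∑ n ∈ Finset.range N, Fk 1 1 (z n, x n)) / N with ht1
  set t2 : ℕ → ℝ := fun N => (∑ n ∈ Finset.range N, Fk 1 2 (z n, x n)) / N with ht2
  have d1 : Tendsto (fun N => s2 N / s0 N) atTop (nhds ((v₁:ℝ) + μ₁^2)) := by
    have h := h02.div h00 ha₁.ne'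
    rwa [mul_div_cancel_left₀ _ ha₁.ne'] at h
  have d2 : Tendsto (fun N => s1 N / s0 N) atTop (nhds μ₁) := by
    have h := h01.div h00 ha₁.ne'
    rwa [mul_div_cancel_left₀ _ ha₁.ne'] at h
  have d3 : Tendsto (fun N => t2 N / t0 N) atTop (nhds ((v₂:ℝ) + μ₂^2)) := by
    have h := h12.div h10 ha₂.ne'
    rwa [mul_div_cancel_left₀ _ ha₂.ne'] at h
  have d4 : Tendsto (fun N => t1 N / t0 N) atTop (nhds μ₂) := by
    have h := h11.div h10 ha₂.ne'
    rwa [mul_div_cancel_left₀ _ ha₂.ne'] at h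
  have hE1 : Tendsto (fun N => s2 N / s0 N - (s1 N / s0 N)^2) atTop (nhds (v₁:ℝ)) := by
    have h := d1.sub (d2.pow 2)
    rwa [show (v₁:ℝ) + μ₁^2 - μ₁^2 = (v₁:ℝ) by ring] at h
  have hE2 : Tendsto (fun N => t2 N / t0 N - (t1 N / t0 N)^2) atTop (nhds (v₂:ℝ)) := by
    have h := d3.sub (d4.pow 2)
    rwa [show (v₂:ℝ) + μ₂^2 - μ₂^2 = (v₂:ℝ) by ring] at h
  have hlog1 : Tendsto (fun N => Real.log (s2 N / s0 N - (s1 N / s0 N)^2)) atTop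
      (nhds (Real.log (v₁:ℝ))) := (Real.continuousAt_log hv₁'.ne').tendsto.comp hE1
  have hlog2 : Tendsto (fun N => Real.log (t2 N / t0 N - (t1 N / t0 N)^2)) atTop
      (nhds (Real.log (v₂:ℝ))) := (Real.continuousAt_log hv₂'.ne').tendsto.comp hE2
  have hlogs0 : Tendsto (fun N => Real.log (s0 N)) atTop (nhds (Real.log a₁)) :=
    (Real.continuousAt_log ha₁.ne').tendsto.comp h00
  have hlogt0 : Tendsto (fun N => Real.log (t0 N)) atTop (nhds (Real.log a₂)) :=
    (Real.continuousAt_log ha₂.ne').tendsto.comp h10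
  have hL : Tendsto (fun N => s0 N / 2 * Real.log (s2 N / s0 N - (s1 N / s0 N)^2)
      + t0 N / 2 * Real.log (t2 N / t0 N - (t1 N / t0 N)^2) + H2 (s0 N) (t0 N)) atTop
      (nhds (a₁ / 2 * Real.log (v₁:ℝ) + a₂ / 2 * Real.log (v₂:ℝ) + H2 a₁ a₂)) := by
    simp only [H2]
    exact (((h00.div_const 2).mul hlog1).add ((h10.div_const 2).mul hlog2)).add
      ((h00.neg.mul hlogs0).sub (h10.mul hlogt0))
  filter_upwards [h00.eventually_const_lt ha₁, h10.eventually_const_lt ha₂,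
    hE1.eventually_const_lt hv₁', hE2.eventually_const_lt hv₂',
    hL.eventually_lt_const (lt_add_of_pos_right _ hε), eventually_ge_atTop 1]
    with N hp1 hp2 hp3 hp4 hlt hN1
  have hNne : (N:ℝ) ≠ 0 := Nat.cast_ne_zero.2 (by omega)
  have hNpos : (0:ℝ) < N := by positivity
  set m : Fin N → ℝ := fun i => Fk 0 0 (z i, x i) with hm
  have hone : (fun i : Fin N => 1 - m i) = fun i : Fin N => Fk 1 0 (z i, x i) :=
    funext fun i => one_sub_Fk _ _
  have halph : alph m = s0 N := by
    rw [alph, hs0]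
    rw [Fin.sum_univ_eq_sum_range (fun n => Fk 0 0 (z n, x n)) N]
  have halphT : (alph fun i : Fin N => 1 - m i) = t0 N := by
    rw [hone, alph, ht0, Fin.sum_univ_eq_sum_range (fun n => Fk 1 0 (z n, x n)) N]
  have hA : (∑ i : Fin N, m i) = s0 N * N := by
    rw [hs0, Fin.sum_univ_eq_sum_range (fun n => Fk 0 0 (z n, x n)) N,
      div_mul_cancel₀ _ hNne]
  have hB : (∑ i : Fin N, m i * (fun i : Fin N => x i) i) = s1 N * N := by
    rw [show (∑ i : Fin N, m i * (fun i : Fin N => x i) i)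
        = ∑ i : Fin N, Fk 0 1 (z i, x i) from Finset.sum_congr rfl fun i _ => by
          rw [hm]; simpa [pow_one] using Fk_mul 0 1 (z i, x i)]
    rw [hs1, Fin.sum_univ_eq_sum_range (fun n => Fk 0 1 (z n, x n)) N,
      div_mul_cancel₀ _ hNne]
  have hC : (∑ i : Fin N, m i * (fun i : Fin N => x i) i ^ 2) = s2 N * N := by
    rw [show (∑ i : Fin N, m i * (fun i : Fin N => x i) i ^ 2)
        = ∑ i : Fin N, Fk 0 2 (z i, x i) from Finset.sum_congr rfl fun i _ => by
          rw [hm]; simpa using Fk_mul 0 2 (z i, x i)]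
    rw [hs2, Fin.sum_univ_eq_sum_range (fun n => Fk 0 2 (z n, x n)) N,
      div_mul_cancel₀ _ hNne]
  have hA' : (∑ i : Fin N, (1 - m i)) = t0 N * N := by
    rw [show (∑ i : Fin N, (1 - m i)) = ∑ i : Fin N, Fk 1 0 (z i, x i) from
      Finset.sum_congr rfl fun i _ => by rw [hm]; exact one_sub_Fk _ _]
    rw [ht0, Fin.sum_univ_eq_sum_range (fun n => Fk 1 0 (z n, x n)) N,
      div_mul_cancel₀ _ hNne]
  have hB' : (∑ i : Fin N, (1 - m i) * (fun i : Fin N => x i) i) = t1 N * N := by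
    rw [show (∑ i : Fin N, (1 - m i) * (fun i : Fin N => x i) i)
        = ∑ i : Fin N, Fk 1 1 (z i, x i) from Finset.sum_congr rfl fun i _ => by
          rw [hm, one_sub_Fk]; simpa [pow_one] using Fk_mul 1 1 (z i, x i)]
    rw [ht1, Fin.sum_univ_eq_sum_range (fun n => Fk 1 1 (z n, x n)) N,
      div_mul_cancel₀ _ hNne]
  have hC' : (∑ i : Fin N, (1 - m i) * (fun i : Fin N => x i) i ^ 2) = t2 N * N := by
    rw [show (∑ i : Fin N, (1 - m i) * (fun i : Fin N => x i) i ^ 2)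
        = ∑ i : Fin N, Fk 1 2 (z i, x i) from Finset.sum_congr rfl fun i _ => by
          rw [hm, one_sub_Fk]; simpa using Fk_mul 1 2 (z i, x i)]
    rw [ht2, Fin.sum_univ_eq_sum_range (fun n => Fk 1 2 (z n, x n)) N,
      div_mul_cancel₀ _ hNne]
  have hsig1 : sig2 (fun i : Fin N => x i) m = s2 N / s0 N - (s1 N / s0 N)^2 := by
    rw [sig2_formula _ _ hNne (by rw [hA]; positivity), hA, hB, hC,
      mul_div_mul_right _ _ hNne, mul_div_mul_right _ _ hNne]
  have hsig2 : (sig2 (fun i : Fin N => x i) fun i => 1 - m i)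
      = t2 N / t0 N - (t1 N / t0 N)^2 := by
    rw [sig2_formula _ _ hNne (by rw [hA']; positivity), hA', hB', hC',
      mul_div_mul_right _ _ hNne, mul_div_mul_right _ _ hNne]
  have hhalf : halfLogG (fun i : Fin N => x i) m
      = s0 N / 2 * Real.log (s2 N / s0 N - (s1 N / s0 N)^2)
        + t0 N / 2 * Real.log (t2 N / t0 N - (t1 N / t0 N)^2) + H2 (s0 N) (t0 N) := by
    rw [halfLogG, halph, halphT, hsig1, hsig2]
  have hmem : ((halfLogG (fun i : Fin N => x i) m : ℝ) : EReal) ∈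
      {v : EReal | ∃ m' : Fin N → ℝ, isMemb m' ∧
        0 < alph m' ∧ (0 < alph fun n => 1 - m' n) ∧
        0 < sig2 (fun i : Fin N => x i) m' ∧
        (0 < sig2 (fun i : Fin N => x i) fun n => 1 - m' n) ∧
        v = ((halfLogG (fun i : Fin N => x i) m' : ℝ) : EReal)} := by
    exact ⟨m, fun i => Fk_mem01 0 _, by rw [halph]; exact hp1, by rw [halphT]; exact hp2,
      by rw [hsig1]; exact hp3, by rw [hsig2]; exact hp4, rfl⟩
  refine le_trans (sInf_le hmem) ?_
  refine EReal.coe_le_coe_iff.2 ?_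
  rw [hhalf]
  exact hlt.le

end LLNAux


/-- **Law-of-large-numbers step in the consistency proof.** For i.i.d. labelled mixture
samples `(Z_n, X_n)`, the infimum `V_N` of `(1/2) ln G` over admissible soft assignments
eventually drops below `(α₁*/2) ln (σ₁*)² + (α₂*/2) ln (σ₂*)² + H(α₁*, α₂*) + ε` with
probability tending to one. -/
theorem lln_step_half_log_G
    {Ω : Type*} [MeasurableSpace Ω] (P : Measure Ω) [IsProbabilityMeasure P]
    (a₁ a₂ μ₁ μ₂ : ℝ) (v₁ v₂ : ℝ≥0)
    (ha₁ : 0 < a₁) (ha₂ : 0 < a₂) (hsum : a₁ + a₂ = 1)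
    (hv₁ : 0 < v₁) (hv₂ : 0 < v₂)
    (Z : ℕ → Ω → Fin 2) (X : ℕ → Ω → ℝ)
    (hZ : ∀ n, Measurable (Z n)) (hX : ∀ n, Measurable (X n))
    (hindep : iIndepFun (fun n ω => (Z n ω, X n ω)) P)
    (hlaw : ∀ n, Measure.map (fun ω => (Z n ω, X n ω)) P = pairLaw a₁ a₂ μ₁ μ₂ v₁ v₂)
    (ε : ℝ) (hε : 0 < ε) :
    Filter.Tendsto
      (fun N : ℕ =>
        P {ω | Vinf (fun i : Fin N => X i ω) ≤
          ((a₁ / 2 * Real.log (v₁ : ℝ) + a₂ / 2 * Real.log (v₂ : ℝ)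
            + H2 a₁ a₂ + ε : ℝ) : EReal)})
      Filter.atTop (nhds 1) := by
  classical
  have hv₁' : v₁ ≠ 0 := hv₁.ne'
  have hv₂' : v₂ ≠ 0 := hv₂.ne'
  have hv₁'' : (0:ℝ) < v₁ := by exact_mod_cast hv₁
  have hv₂'' : (0:ℝ) < v₂ := by exact_mod_cast hv₂
  set ν := pairLaw a₁ a₂ μ₁ μ₂ v₁ v₂ with hν
  -- the six integral values
  have val00 : ∫ p, LLNAux.Fk 0 0 p ∂ν = a₁ := by
    rw [hν, LLNAux.integral_Fk0 ha₁.le ha₂.le hv₁' hv₂' 0 (by norm_num)]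
    simp
  have val01 : ∫ p, LLNAux.Fk 0 1 p ∂ν = a₁ * μ₁ := by
    rw [hν, LLNAux.integral_Fk0 ha₁.le ha₂.le hv₁' hv₂' 1 (by norm_num)]
    simp [pow_one, LLNAux.gauss_integral_id hv₁']
  have val02 : ∫ p, LLNAux.Fk 0 2 p ∂ν = a₁ * ((v₁:ℝ) + μ₁^2) := by
    rw [hν, LLNAux.integral_Fk0 ha₁.le ha₂.le hv₁' hv₂' 2 (by norm_num)]
    rw [LLNAux.gauss_integral_sq hv₁']
  have val10 : ∫ p, LLNAux.Fk 1 0 p ∂ν = a₂ := by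
    rw [hν, LLNAux.integral_Fk1 ha₁.le ha₂.le hv₁' hv₂' 0 (by norm_num)]
    simp
  have val11 : ∫ p, LLNAux.Fk 1 1 p ∂ν = a₂ * μ₂ := by
    rw [hν, LLNAux.integral_Fk1 ha₁.le ha₂.le hv₁' hv₂' 1 (by norm_num)]
    simp [pow_one, LLNAux.gauss_integral_id hv₂']
  have val12 : ∫ p, LLNAux.Fk 1 2 p ∂ν = a₂ * ((v₂:ℝ) + μ₂^2) := by
    rw [hν, LLNAux.integral_Fk1 ha₁.le ha₂.le hv₁' hv₂' 2 (by norm_num)]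
    rw [LLNAux.gauss_integral_sq hv₂']
  -- six a.e. LLN statements
  have K00 := LLNAux.slln_key P ν Z X hZ hX hindep hlaw (LLNAux.Fk 0 0)
    (LLNAux.measurable_Fk 0 0) (LLNAux.integrable_Fk hv₁' hv₂' 0 0 (by norm_num))
  have K01 := LLNAux.slln_key P ν Z X hZ hX hindep hlaw (LLNAux.Fk 0 1)
    (LLNAux.measurable_Fk 0 1) (LLNAux.integrable_Fk hv₁' hv₂' 0 1 (by norm_num))
  have K02 := LLNAux.slln_key P ν Z X hZ hX hindep hlaw (LLNAux.Fk 0 2)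
    (LLNAux.measurable_Fk 0 2) (LLNAux.integrable_Fk hv₁' hv₂' 0 2 (by norm_num))
  have K10 := LLNAux.slln_key P ν Z X hZ hX hindep hlaw (LLNAux.Fk 1 0)
    (LLNAux.measurable_Fk 1 0) (LLNAux.integrable_Fk hv₁' hv₂' 1 0 (by norm_num))
  have K11 := LLNAux.slln_key P ν Z X hZ hX hindep hlaw (LLNAux.Fk 1 1)
    (LLNAux.measurable_Fk 1 1) (LLNAux.integrable_Fk hv₁' hv₂' 1 1 (by norm_num))
  have K12 := LLNAux.slln_key P ν Z X hZ hX hindep hlaw (LLNAux.Fk 1 2)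
    (LLNAux.measurable_Fk 1 2) (LLNAux.integrable_Fk hv₁' hv₂' 1 2 (by norm_num))
  rw [val00] at K00; rw [val01] at K01; rw [val02] at K02
  rw [val10] at K10; rw [val11] at K11; rw [val12] at K12
  set c : EReal := ((a₁ / 2 * Real.log (v₁ : ℝ) + a₂ / 2 * Real.log (v₂ : ℝ)
      + H2 a₁ a₂ + ε : ℝ) : EReal) with hc
  set A : ℕ → Set Ω := fun N => {ω | Vinf (fun i : Fin N => X i ω) ≤ c} with hA
  have hae : ∀ᵐ ω ∂P, ∀ᶠ N in Filter.atTop, ω ∈ A N := by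
    filter_upwards [K00, K01, K02, K10, K11, K12] with ω k00 k01 k02 k10 k11 k12
    have h := LLNAux.det_step a₁ a₂ μ₁ μ₂ v₁ v₂ ha₁ ha₂ hv₁ hv₂ ε hε
      (fun n => Z n ω) (fun n => X n ω) k00 k01 k02 k10 k11 k12
    exact h
  set B : ℕ → Set Ω := fun N => ⋂ M, ⋂ (_ : N ≤ M), A M with hB
  have hBmono : Monotone B := fun i j hij ω hω =>
    Set.mem_iInter₂.2 fun M hM => Set.mem_iInter₂.1 hω M (hij.trans hM)
  have hBsub : ∀ N, B N ⊆ A N := fun N ω hω => Set.mem_iInter₂.1 hω N le_rfl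
  have hUnion : {ω | ∀ᶠ N in Filter.atTop, ω ∈ A N} ⊆ ⋃ N, B N := fun ω hω => by
    rcases Filter.eventually_atTop.1 hω with ⟨N, hN⟩
    exact Set.mem_iUnion.2 ⟨N, Set.mem_iInter₂.2 fun M hM => hN M hM⟩
  have h1' : P (⋃ N, B N) = 1 := by
    refine le_antisymm prob_le_one ?_
    have hcompl : P {ω | ∀ᶠ N in Filter.atTop, ω ∈ A N}ᶜ = 0 := by
      have := ae_iff.1 hae
      simpa [Set.compl_setOf] using this
    calc (1:ENNReal) = P Set.univ := measure_univ.symm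
      _ ≤ P {ω | ∀ᶠ N in Filter.atTop, ω ∈ A N}
          + P {ω | ∀ᶠ N in Filter.atTop, ω ∈ A N}ᶜ := by
          rw [← Set.union_compl_self {ω | ∀ᶠ N in Filter.atTop, ω ∈ A N}]
          exact measure_union_le _ _
      _ = P {ω | ∀ᶠ N in Filter.atTop, ω ∈ A N} := by rw [hcompl, add_zero]
      _ ≤ P (⋃ N, B N) := measure_mono hUnion
  have hBlim : Filter.Tendsto (fun N => P (B N)) Filter.atTop (nhds 1) := by
    rw [← h1', (hBmono.directed_le).measure_iUnion]
    exact tendsto_atTop_iSup fun i j hij => measure_mono (hBmono hij)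
  exact tendsto_of_tendsto_of_tendsto_of_le_of_le hBlim tendsto_const_nhds
    (fun N => measure_mono (hBsub N)) (fun N => prob_le_one)


end
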